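/- Let b ∈ [0,1], let x_e ∈ [0, b], let s ≥ 0 with x_e + s ≤ 2b, and let P₀ ~ Pois(x_e) and P₁ ~ Pois(s) be independent Poisson random variables. Then E[ P₀ / (P₀ + P₁) ] ≥ x_e · E[ 1/(1 + N) ] = x_e · (1 - e^{-(x_e + s)})/(x_e + s) ≥ x_e · (1 - e^{-2b})/(2b), where N ~ Pois(x_e + s) and the ratio is interpreted as 0 when P₀ = 0. -/

import Mathlib

/-- The probability that a Poisson random variable with parameter `r ≥ 0` equals `n`. -/
noncomputable def poissonProb (r : ℝ) (n : ℕ) : ℝ := Real.exp (-r) * r ^ n / (Nat.factorial n)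



lemma pp_nonneg {r : ℝ} (hr : 0 ≤ r) (n : ℕ) : 0 ≤ poissonProb r n := by
  unfold poissonProb
  positivity

lemma pp_summable (r : ℝ) : Summable (poissonProb r) := by
  unfold poissonProb
  simp_rw [mul_div_assoc]
  exact (Real.summable_pow_div_factorial r).mul_left _

lemma exp_tsum (x : ℝ) : Real.exp x = ∑' n : ℕ, x ^ n / n.factorial := by
  rw [Real.exp_eq_exp_ℝ, NormedSpace.exp_eq_tsum_div]

lemma T_eval {l : ℝ} (hl : 0 < l) :
    ∑' n : ℕ, (1 / (1 + (n : ℝ))) * poissonProb l n = (1 - Real.exp (-l)) / l := by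
  have h1 : ∀ n : ℕ, (1 / (1 + (n : ℝ))) * poissonProb l n
      = (Real.exp (-l) / l) * (l ^ (n + 1) / (n + 1).factorial) := by
    intro n
    have hf : ((n.factorial : ℝ)) ≠ 0 := Nat.cast_ne_zero.mpr n.factorial_ne_zero
    have hfs : (((n + 1).factorial : ℝ)) = ((n : ℝ) + 1) * n.factorial := by
      rw [Nat.factorial_succ]; push_cast; ring
    have hn1 : (1 : ℝ) + (n : ℝ) ≠ 0 := by positivity
    unfold poissonProb
    rw [hfs]
    field_simp
    ring
  rw [tsum_congr h1]
  have hsum : Summable (fun n : ℕ => l ^ n / n.factorial) := Real.summable_pow_div_factorial l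
  have hshift : ∑' n : ℕ, l ^ (n + 1) / (n + 1).factorial = Real.exp l - 1 := by
    have h0 := Summable.tsum_eq_zero_add hsum
    rw [← exp_tsum] at h0
    simp only [pow_zero, Nat.factorial_zero, Nat.cast_one] at h0
    linarith
  rw [tsum_mul_left, hshift, Real.exp_neg]
  have := Real.exp_pos l
  field_simp

lemma tsum_prod_eq_tsum_antidiagonal {g : ℕ × ℕ → ℝ} (hg : Summable g) :
    ∑' p : ℕ × ℕ, g p = ∑' n : ℕ, ∑ kl ∈ Finset.HasAntidiagonal.antidiagonal n, g kl := by
  conv_rhs => congr; ext n; rw [← Finset.sum_finset_coe, ← tsum_fintype (L := SummationFilter.unconditional _)]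
  rw [← Finset.HasAntidiagonal.sigmaAntidiagonalEquivProd.tsum_eq g]
  exact Summable.tsum_sigma' (fun n => (hasSum_fintype _).summable)
    (Finset.HasAntidiagonal.sigmaAntidiagonalEquivProd.summable_iff.mpr hg)

lemma antidiag_sum (r t : ℝ) (k : ℕ) :
    ∑ kl ∈ Finset.HasAntidiagonal.antidiagonal k,
        (r * (1 / ((kl.1 : ℝ) + (kl.2 : ℝ) + 1)) *
          (Real.exp (-(r + t)) * r ^ kl.1 * t ^ kl.2 /
            ((kl.1.factorial : ℝ) * (kl.2.factorial : ℝ))))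
      = r * (1 / (1 + (k : ℝ))) * poissonProb (r + t) k := by
  rw [Finset.Nat.sum_antidiagonal_eq_sum_range_succ_mk]
  unfold poissonProb
  rw [add_pow]
  rw [Finset.mul_sum, Finset.sum_div, Finset.mul_sum]
  refine Finset.sum_congr rfl fun m hm => ?_
  have hmk : m ≤ k := Nat.lt_succ_iff.mp (Finset.mem_range.mp hm)
  have hcast : ((k - m : ℕ) : ℝ) = (k : ℝ) - (m : ℝ) := Nat.cast_sub hmk
  have hchoose : (k.choose m : ℝ)
      = (k.factorial : ℝ) / ((m.factorial : ℝ) * ((k - m).factorial : ℝ)) :=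
    Nat.cast_choose ℝ hmk
  have hf1 : ((m.factorial : ℝ)) ≠ 0 := Nat.cast_ne_zero.mpr m.factorial_ne_zero
  have hf2 : (((k - m).factorial : ℝ)) ≠ 0 := Nat.cast_ne_zero.mpr (k - m).factorial_ne_zero
  have hf3 : ((k.factorial : ℝ)) ≠ 0 := Nat.cast_ne_zero.mpr k.factorial_ne_zero
  have hk1 : (m : ℝ) + ((k - m : ℕ) : ℝ) + 1 = 1 + (k : ℝ) := by rw [hcast]; ring
  have hk0 : (1 : ℝ) + (k : ℝ) ≠ 0 := by positivity
  rw [hk1, hchoose]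
  field_simp

lemma main_id (r t : ℝ) (hr : 0 ≤ r) (ht : 0 ≤ t) :
    (∑' n : ℕ, ∑' j : ℕ, ((n : ℝ) / ((n : ℝ) + (j : ℝ))) * (poissonProb r n * poissonProb t j))
      = r * ∑' n : ℕ, (1 / (1 + (n : ℝ))) * poissonProb (r + t) n := by
  set f : ℕ → ℕ → ℝ :=
    fun n j => ((n : ℝ) / ((n : ℝ) + (j : ℝ))) * (poissonProb r n * poissonProb t j) with hfdef
  set g : ℕ × ℕ → ℝ := fun p => r * (1 / ((p.1 : ℝ) + (p.2 : ℝ) + 1)) *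
      (Real.exp (-(r + t)) * r ^ p.1 * t ^ p.2 /
        ((p.1.factorial : ℝ) * (p.2.factorial : ℝ))) with hgdef
  have hppn : ∀ n j : ℕ, 0 ≤ poissonProb r n * poissonProb t j :=
    fun n j => mul_nonneg (pp_nonneg hr n) (pp_nonneg ht j)
  have hfrac_nonneg : ∀ n j : ℕ, 0 ≤ (n : ℝ) / ((n : ℝ) + (j : ℝ)) :=
    fun n j => div_nonneg (by positivity) (by positivity)
  have hfrac_le : ∀ n j : ℕ, (n : ℝ) / ((n : ℝ) + (j : ℝ)) ≤ 1 := by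
    intro n j
    rcases eq_or_ne ((n : ℝ) + (j : ℝ)) 0 with h | h
    · simp [h]
    · apply div_le_one_of_le₀
      · linarith [Nat.cast_nonneg (α := ℝ) j]
      · positivity
  have hf_nonneg : ∀ n j, 0 ≤ f n j := fun n j => mul_nonneg (hfrac_nonneg n j) (hppn n j)
  have hf_le : ∀ n j, f n j ≤ poissonProb r n * poissonProb t j :=
    fun n j => mul_le_of_le_one_left (hppn n j) (hfrac_le n j)
  have hX : ∀ p : ℕ × ℕ,
      Real.exp (-(r + t)) * r ^ p.1 * t ^ p.2 / ((p.1.factorial : ℝ) * (p.2.factorial : ℝ))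
        = poissonProb r p.1 * poissonProb t p.2 := by
    intro p
    unfold poissonProb
    rw [neg_add, Real.exp_add]
    have hf1 : ((p.1.factorial : ℝ)) ≠ 0 := Nat.cast_ne_zero.mpr p.1.factorial_ne_zero
    have hf2 : ((p.2.factorial : ℝ)) ≠ 0 := Nat.cast_ne_zero.mpr p.2.factorial_ne_zero
    field_simp
  have hg_nonneg : ∀ p, 0 ≤ g p := by
    intro p
    simp only [hgdef]
    have h1 : 0 ≤ (1 : ℝ) / ((p.1 : ℝ) + (p.2 : ℝ) + 1) := by positivity
    have h2 : (0:ℝ) ≤ Real.exp (-(r + t)) * r ^ p.1 * t ^ p.2 /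
        ((p.1.factorial : ℝ) * (p.2.factorial : ℝ)) := by
      rw [hX p]; exact hppn p.1 p.2
    exact mul_nonneg (mul_nonneg hr h1) h2
  have hg_le : ∀ p : ℕ × ℕ, g p ≤ r * (poissonProb r p.1 * poissonProb t p.2) := by
    intro p
    simp only [hgdef]
    rw [hX p]
    have h1 : (1 : ℝ) / ((p.1 : ℝ) + (p.2 : ℝ) + 1) ≤ 1 := by
      rw [div_le_one (by positivity)]
      have := Nat.cast_nonneg (α := ℝ) p.1
      have := Nat.cast_nonneg (α := ℝ) p.2
      linarith
    have h2 : r * (1 / ((p.1 : ℝ) + (p.2 : ℝ) + 1)) ≤ r := mul_le_of_le_one_right hr h1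
    exact mul_le_mul_of_nonneg_right h2 (hppn p.1 p.2)
  have hppprod : Summable (fun p : ℕ × ℕ => poissonProb r p.1 * poissonProb t p.2) :=
    (pp_summable r).mul_of_nonneg (pp_summable t) (pp_nonneg hr) (pp_nonneg ht)
  have hgsum : Summable g := Summable.of_nonneg_of_le hg_nonneg hg_le (hppprod.mul_left r)
  have hkey : ∀ m j : ℕ, f (m + 1) j = g (m, j) := by
    intro m j
    simp only [hfdef, hgdef]
    unfold poissonProb
    have hf1 : ((m.factorial : ℝ)) ≠ 0 := Nat.cast_ne_zero.mpr m.factorial_ne_zero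
    have hf2 : ((j.factorial : ℝ)) ≠ 0 := Nat.cast_ne_zero.mpr j.factorial_ne_zero
    have hfs : (((m + 1).factorial : ℝ)) = ((m : ℝ) + 1) * (m.factorial : ℝ) := by
      rw [Nat.factorial_succ]; push_cast; ring
    have hne1 : ((m : ℝ) + 1) + (j : ℝ) ≠ 0 := by positivity
    have hne2 : (m : ℝ) + (j : ℝ) + 1 ≠ 0 := by positivity
    rw [neg_add, Real.exp_add]
    push_cast
    rw [hfs]
    field_simp
    ring
  have hf0 : ∀ j, f 0 j = 0 := by intro j; simp [hfdef]
  have hinner : ∀ n, Summable (fun j => f n j) := by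
    intro n
    exact Summable.of_nonneg_of_le (hf_nonneg n) (hf_le n) ((pp_summable t).mul_left _)
  have hFle : ∀ n, (∑' j, f n j) ≤ poissonProb r n * ∑' j, poissonProb t j := by
    intro n
    rw [← tsum_mul_left]
    exact Summable.tsum_le_tsum (hf_le n) (hinner n) ((pp_summable t).mul_left _)
  have hF_nonneg : ∀ n, 0 ≤ ∑' j, f n j := fun n => tsum_nonneg (hf_nonneg n)
  have hFsum : Summable (fun n => ∑' j, f n j) :=
    Summable.of_nonneg_of_le hF_nonneg hFle ((pp_summable r).mul_right _)
  calc ∑' n, ∑' j, f n j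
      = (∑' j, f 0 j) + ∑' m, ∑' j, f (m + 1) j := Summable.tsum_eq_zero_add hFsum
    _ = ∑' m, ∑' j, g (m, j) := by
        rw [tsum_congr hf0, tsum_zero, zero_add]
        exact tsum_congr fun m => tsum_congr fun j => hkey m j
    _ = ∑' p : ℕ × ℕ, g p := (Summable.tsum_prod' hgsum hgsum.prod_factor).symm
    _ = ∑' k, ∑ kl ∈ Finset.HasAntidiagonal.antidiagonal k, g kl := tsum_prod_eq_tsum_antidiagonal hgsum
    _ = ∑' k : ℕ, r * ((1 / (1 + (k : ℝ))) * poissonProb (r + t) k) := by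
        refine tsum_congr fun k => ?_
        rw [antidiag_sum r t k, mul_assoc]
    _ = r * ∑' k : ℕ, (1 / (1 + (k : ℝ))) * poissonProb (r + t) k := tsum_mul_left


lemma mono_aux {l c : ℝ} (hl : 0 < l) (hlc : l ≤ c) :
    (1 - Real.exp (-c)) / c ≤ (1 - Real.exp (-l)) / l := by
  have hc : 0 < c := lt_of_lt_of_le hl hlc
  rw [div_le_div_iff₀ hc hl]
  set d := c - l with hd
  have hd0 : 0 ≤ d := by simp [hd]; linarith
  have h1 : Real.exp (-c) = Real.exp (-l) * Real.exp (-d) := by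
    rw [← Real.exp_add, hd]; ring_nf
  have h2 : 1 - Real.exp (-d) ≤ d := by
    have := Real.add_one_le_exp (-d); linarith
  have h3 : l + 1 ≤ Real.exp l := Real.add_one_le_exp l
  have hexpl : Real.exp l * Real.exp (-l) = 1 := by rw [← Real.exp_add]; simp
  have hepos : 0 < Real.exp (-l) := Real.exp_pos _
  have h4 : l * Real.exp (-l) ≤ 1 - Real.exp (-l) := by nlinarith
  have h5 : 0 ≤ l * Real.exp (-l) := by positivity
  have h6 : l * Real.exp (-l) * (1 - Real.exp (-d)) ≤ l * Real.exp (-l) * d :=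
    mul_le_mul_of_nonneg_left h2 h5
  have h7 : d * (l * Real.exp (-l)) ≤ d * (1 - Real.exp (-l)) :=
    mul_le_mul_of_nonneg_left h4 hd0
  have hcl : c = l + d := by rw [hd]; ring
  nlinarith [h6, h7]

/-- For `b ∈ [0,1]`, `x_e ∈ [0,b]`, `s ≥ 0` with `x_e + s ≤ 2b`, and independent
`P₀ ~ Pois(x_e)` and `P₁ ~ Pois(s)`:
`E[P₀/(P₀+P₁)] ≥ x_e · E[1/(1+N)] = x_e·(1-e^{-(x_e+s)})/(x_e+s) ≥ x_e·(1-e^{-2b})/(2b)`,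
where `N ~ Pois(x_e+s)` and the ratio is `0` when `P₀ = 0`. -/
theorem general_matching_balancedness_estimate
    (b xe s : ℝ) (hb0 : 0 ≤ b) (hb1 : b ≤ 1) (hx0 : 0 ≤ xe) (hxb : xe ≤ b)
    (hs : 0 ≤ s) (hsum : xe + s ≤ 2 * b) :
    (∑' n : ℕ, ∑' j : ℕ,
        ((n : ℝ) / ((n : ℝ) + (j : ℝ))) * (poissonProb xe n * poissonProb s j)) ≥
      xe * ∑' n : ℕ, (1 / (1 + (n : ℝ))) * poissonProb (xe + s) n ∧
    xe * (∑' n : ℕ, (1 / (1 + (n : ℝ))) * poissonProb (xe + s) n) =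
      xe * (1 - Real.exp (-(xe + s))) / (xe + s) ∧
    xe * (1 - Real.exp (-(xe + s))) / (xe + s) ≥ xe * (1 - Real.exp (-(2 * b))) / (2 * b) := by
  refine ⟨(main_id xe s hx0 hs).ge, ?_, ?_⟩
  · rcases eq_or_lt_of_le (by linarith : (0:ℝ) ≤ xe + s) with h | h
    · have hxe : xe = 0 := by linarith
      simp [hxe]
    · rw [T_eval h, mul_div_assoc]
  · rcases eq_or_lt_of_le hx0 with h | h
    · simp [← h]
    · have hl : 0 < xe + s := by linarith
      rw [ge_iff_le, mul_div_assoc, mul_div_assoc]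
      exact mul_le_mul_of_nonneg_left (mono_aux hl hsum) hx0
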